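/- If μ₁ ≥ μ₂, then the function T₂(k) = Σ_{n=0}^{k} T₂(n+1, k−n)·p₁(n|k) is non-decreasing in k, i.e. T₂(k+1) ≥ T₂(k) for all k ≥ 0. -/

import Mathlib

/-- `p₁(n|k)`: conditional probability that the stationary queue length at node 1 equals `n`
given `k` customers in total; `0` for `n > k`. -/
noncomputable def p1 (μ₁ μ₂ : ℝ) (n k : ℕ) : ℝ :=
  if n ≤ k then μ₁ ^ (k - n) * μ₂ ^ n / ∑ h ∈ Finset.range (k + 1), μ₁ ^ (k - h) * μ₂ ^ h
  else 0


noncomputable def Zs (x y : ℝ) (k : ℕ) : ℝ := ∑ h ∈ Finset.range (k+1), x^(k-h) * y^h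
noncomputable def As (x y : ℝ) (k : ℕ) : ℝ :=
  ∑ h ∈ Finset.range (k+1), ((k+1-h : ℕ) : ℝ) * (x^(k-h) * y^h)
noncomputable def Bs (x y : ℝ) (k : ℕ) : ℝ :=
  ∑ n ∈ Finset.range (k+1), ((n+1 : ℕ) : ℝ) * (x^(k-n) * y^n)
noncomputable def Sd (x y : ℝ) (T : ℕ × ℕ → ℝ) (k : ℕ) : ℝ :=
  ∑ n ∈ Finset.range (k+1), T (n+1, k-n) * (x^(k-n) * y^n)

lemma Zs_succ (x y : ℝ) (k : ℕ) : Zs x y (k+1) = x * Zs x y k + y^(k+1) := by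
  unfold Zs
  rw [Finset.sum_range_succ, Finset.mul_sum]
  have h1 : ∀ h ∈ Finset.range (k+1), x^(k+1-h) * y^h = x * (x^(k-h) * y^h) := by
    intro h hh
    have : k+1-h = (k-h)+1 := by
      have := Finset.mem_range.mp hh; omega
    rw [this, pow_succ]; ring
  rw [Finset.sum_congr rfl h1]
  simp

lemma As_succ (x y : ℝ) (k : ℕ) : As x y (k+1) = x * As x y k + Zs x y (k+1) := by
  unfold As Zs
  rw [Finset.sum_range_succ, Finset.sum_range_succ (f := fun h => x^(k+1-h) * y^h),
    Finset.mul_sum]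
  have h1 : ∀ h ∈ Finset.range (k+1), ((k+1+1-h : ℕ):ℝ) * (x^(k+1-h) * y^h)
      = x * (((k+1-h : ℕ):ℝ) * (x^(k-h) * y^h)) + x^(k+1-h) * y^h := by
    intro h hh
    have hk : h ≤ k := by have := Finset.mem_range.mp hh; omega
    have e1 : k+1+1-h = (k+1-h)+1 := by omega
    have e2 : k+1-h = (k-h)+1 := by omega
    rw [e1]
    push_cast [e2]
    rw [pow_succ]
    ring
  rw [Finset.sum_congr rfl h1, Finset.sum_add_distrib]
  have e3 : k+1+1-(k+1) = 1 := by omega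
  rw [e3, Nat.sub_self, pow_zero]
  push_cast
  ring
lemma Bs_succ (x y : ℝ) (k : ℕ) : Bs x y (k+1) = x * Bs x y k + ((k:ℝ)+2) * y^(k+1) := by
  unfold Bs
  rw [Finset.sum_range_succ, Finset.mul_sum]
  have h1 : ∀ n ∈ Finset.range (k+1), ((n+1 : ℕ):ℝ) * (x^(k+1-n) * y^n)
      = x * (((n+1:ℕ):ℝ) * (x^(k-n) * y^n)) := by
    intro n hn
    have : k+1-n = (k-n)+1 := by have := Finset.mem_range.mp hn; omega
    rw [this, pow_succ]; ring
  rw [Finset.sum_congr rfl h1, ← Finset.mul_sum, Nat.sub_self, pow_zero]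
  push_cast
  ring

lemma AB_Z (x y : ℝ) (k : ℕ) :
    x * As x y k + y * Bs x y k = ((k:ℝ)+1) * Zs x y (k+1) := by
  induction k with
  | zero =>
      unfold As Bs Zs
      simp [Finset.sum_range_succ]
  | succ k ih =>
      rw [As_succ, Bs_succ, Zs_succ x y (k+1), Zs_succ x y k] at *
      push_cast at *
      linear_combination x * ih

lemma geom_Z (x y : ℝ) (k : ℕ) : (x - y) * Zs x y k = x^(k+1) - y^(k+1) := by
  induction k with
  | zero => unfold Zs; simp
  | succ k ih => rw [Zs_succ]; linear_combination x * ih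

lemma Sd_rec (x y : ℝ) (hx : 0 < x) (hy : 0 < y) (T : ℕ × ℕ → ℝ)
    (hT0 : ∀ m : ℕ, T (0, m) = m / y)
    (hTb : ∀ n : ℕ, T (n + 1, 0) = 1 / x + T (n, 1))
    (hTrec : ∀ n m : ℕ, T (n + 1, m + 1) =
      1 / (x + y) + x / (x + y) * T (n, m + 2) + y / (x + y) * T (n + 1, m))
    (k : ℕ) :
    x * y * Sd x y T (k+1) = x * y^2 * Sd x y T k + y * Zs x y (k+1) + ((k:ℝ)+2) * x^(k+2) := by
  have hx' : x ≠ 0 := ne_of_gt hx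
  have hy' : y ≠ 0 := ne_of_gt hy
  have hs : x + y ≠ 0 := by positivity
  have peel : Sd x y T (k+1) =
      (∑ n ∈ Finset.range k, T (n+1, k+1-n) * (x^(k+1-n) * y^n))
      + T (k+1, 1) * (x * y^k) + T (k+2, 0) * y^(k+1) := by
    unfold Sd
    rw [Finset.sum_range_succ, Finset.sum_range_succ]
    have e1 : k+1-k = 1 := by omega
    have e2 : k+1-(k+1) = 0 := by omega
    rw [e1, e2, pow_zero, pow_one, one_mul]
  have hmain : ∀ n ∈ Finset.range (k+1),
      (x+y) * (T (n+1, k+1-n) * (x^(k+1-n) * y^n)) =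
      x^(k+1-n) * y^n + x * T (n, k+2-n) * (x^(k+1-n) * y^n)
        + y * (x * (T (n+1, k-n) * (x^(k-n) * y^n))) := by
    intro n hn
    have hnk : n ≤ k := by have := Finset.mem_range.mp hn; omega
    have e1 : k+1-n = (k-n)+1 := by omega
    have e2 : k+2-n = (k-n)+2 := by omega
    rw [e1, e2, hTrec n (k-n)]
    field_simp
    ring
  have eq1 : (x+y) * Sd x y T (k+1) =
      (∑ n ∈ Finset.range (k+1), x^(k+1-n) * y^n)
      + (∑ n ∈ Finset.range (k+1), x * T (n, k+2-n) * (x^(k+1-n) * y^n))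
      + y * (x * Sd x y T k)
      + (x+y) * (T (k+2, 0) * y^(k+1)) := by
    unfold Sd
    rw [Finset.sum_range_succ, mul_add, Finset.mul_sum, Finset.sum_congr rfl hmain,
      Finset.sum_add_distrib, Finset.sum_add_distrib, ← Finset.mul_sum, ← Finset.mul_sum]
    have e2 : k+1-(k+1) = 0 := by omega
    rw [e2, pow_zero, one_mul]
  have eq2 : ∑ n ∈ Finset.range (k+1), x * T (n, k+2-n) * (x^(k+1-n) * y^n) =
      y * (Sd x y T (k+1) - T (k+1, 1) * (x * y^k) - T (k+2, 0) * y^(k+1))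
      + x * (((k:ℝ)+2)/y) * x^(k+1) := by
    rw [Finset.sum_range_succ']
    have hterm : ∀ i ∈ Finset.range k,
        x * T (i+1, k+2-(i+1)) * (x^(k+1-(i+1)) * y^(i+1)) =
        y * (T (i+1, k+1-i) * (x^(k+1-i) * y^i)) := by
      intro i hi
      have hik : i < k := Finset.mem_range.mp hi
      have e1 : k+2-(i+1) = k+1-i := by omega
      have e2 : k+1-(i+1) = k-i := by omega
      have e3 : k+1-i = (k-i)+1 := by omega
      rw [e1, e2]
      rw [e3, pow_succ, pow_succ]
      ring
    rw [Finset.sum_congr rfl hterm, ← Finset.mul_sum]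
    have h0 : T (0, k+2-0) = ((k:ℝ)+2)/y := by
      have : k+2-0 = k+2 := rfl
      rw [this, hT0]; push_cast; ring
    rw [h0]
    have e4 : k+1-0 = k+1 := rfl
    rw [e4, pow_zero]
    have peel' : ∑ i ∈ Finset.range k, T (i+1, k+1-i) * (x^(k+1-i) * y^i)
        = Sd x y T (k+1) - T (k+1, 1) * (x * y^k) - T (k+2, 0) * y^(k+1) := by
      rw [peel]; ring
    rw [peel']
    ring
  have hTb' : x * T (k+2, 0) = 1 + x * T (k+1, 1) := by
    rw [hTb (k+1)]; field_simp
  have hZ : Zs x y (k+1) = (∑ n ∈ Finset.range (k+1), x^(k+1-n) * y^n) + y^(k+1) := by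
    unfold Zs
    rw [Finset.sum_range_succ]
    have e2 : k+1-(k+1) = 0 := by omega
    rw [e2, pow_zero, one_mul]
  rw [hZ]
  have eq2' : y * (∑ n ∈ Finset.range (k+1), x * T (n, k+2-n) * (x^(k+1-n) * y^n)) =
      y * (y * (Sd x y T (k+1) - T (k+1, 1) * (x * y^k) - T (k+2, 0) * y^(k+1)))
      + ((k:ℝ)+2) * x^(k+2) := by
    rw [eq2]; field_simp; ring
  linear_combination y * eq1 + eq2' + y^(k+2) * hTb'

lemma Zs_pos (x y : ℝ) (hx : 0 < x) (hy : 0 < y) (k : ℕ) : 0 < Zs x y k := by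
  unfold Zs
  apply Finset.sum_pos
  · intro h _; positivity
  · exact ⟨0, Finset.mem_range.mpr (by omega)⟩

lemma key (x y : ℝ) (hx : 0 < x) (hy : 0 < y) (T : ℕ × ℕ → ℝ)
    (hT0 : ∀ m : ℕ, T (0, m) = m / y)
    (hTb : ∀ n : ℕ, T (n + 1, 0) = 1 / x + T (n, 1))
    (hTrec : ∀ n m : ℕ, T (n + 1, m + 1) =
      1 / (x + y) + x / (x + y) * T (n, m + 2) + y / (x + y) * T (n + 1, m)) :
    ∀ k, x * y * Sd x y T k = x * As x y k + y * Bs x y k := by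
  have hx' : x ≠ 0 := ne_of_gt hx
  have hy' : y ≠ 0 := ne_of_gt hy
  intro k
  induction k with
  | zero =>
      unfold Sd As Bs
      simp only [zero_add, Finset.sum_range_one, Nat.sub_zero, Nat.sub_self, pow_zero,
        one_mul, mul_one, Nat.cast_one]
      rw [hTb 0, hT0 1]
      push_cast
      field_simp
      ring
  | succ k ih =>
      have h6 := Sd_rec x y hx hy T hT0 hTb hTrec k
      have h4 := AB_Z x y k
      have h5 := geom_Z x y (k+1)
      rw [As_succ, Bs_succ]
      linear_combination h6 + y * ih - (x - y) * h4 - ((k:ℝ)+2) * h5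

lemma formula (x y : ℝ) (hx : 0 < x) (hy : 0 < y) (T : ℕ × ℕ → ℝ)
    (hT0 : ∀ m : ℕ, T (0, m) = m / y)
    (hTb : ∀ n : ℕ, T (n + 1, 0) = 1 / x + T (n, 1))
    (hTrec : ∀ n m : ℕ, T (n + 1, m + 1) =
      1 / (x + y) + x / (x + y) * T (n, m + 2) + y / (x + y) * T (n + 1, m))
    (T₂ : ℕ → ℕ → ℝ) (hT₂ : ∀ n m : ℕ, T₂ n m = T (n, m) - n / x) (k : ℕ) :
    ∑ n ∈ Finset.range (k+1), T₂ (n+1) (k-n) * p1 x y n k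
      = As x y k / (y * Zs x y k) := by
  have hx' : x ≠ 0 := ne_of_gt hx
  have hy' : y ≠ 0 := ne_of_gt hy
  have hZ : 0 < Zs x y k := Zs_pos x y hx hy k
  have hp : ∀ n ∈ Finset.range (k+1), T₂ (n+1) (k-n) * p1 x y n k
      = (T (n+1, k-n) * (x^(k-n) * y^n) - ((n+1:ℕ):ℝ) * (x^(k-n) * y^n) / x) / Zs x y k := by
    intro n hn
    have hnk : n ≤ k := by have := Finset.mem_range.mp hn; omega
    rw [hT₂]
    unfold p1 Zs
    rw [if_pos hnk]
    field_simp
  rw [Finset.sum_congr rfl hp, ← Finset.sum_div, Finset.sum_sub_distrib]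
  have h2 : ∑ n ∈ Finset.range (k+1), ((n+1:ℕ):ℝ) * (x^(k-n) * y^n) / x
      = Bs x y k / x := by
    rw [← Finset.sum_div]; rfl
  rw [h2]
  have h1 : ∑ n ∈ Finset.range (k+1), T (n+1, k-n) * (x^(k-n) * y^n) = Sd x y T k := rfl
  rw [h1]
  have hk := key x y hx hy T hT0 hTb hTrec k
  field_simp
  linear_combination hk

lemma As_le (x y : ℝ) (hx : 0 < x) (hy : 0 < y) (k : ℕ) :
    As x y k ≤ ((k:ℝ)+1) * Zs x y k := by
  unfold As Zs
  rw [Finset.mul_sum]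
  apply Finset.sum_le_sum
  intro h hh
  have hc : ((k+1-h : ℕ):ℝ) ≤ (k:ℝ)+1 := by
    have : ((k+1-h : ℕ):ℝ) ≤ ((k+1 : ℕ):ℝ) := Nat.cast_le.mpr (by omega)
    push_cast at this; linarith
  have : (0:ℝ) ≤ x^(k-h) * y^h := by positivity
  nlinarith

lemma Zs_ge (x y : ℝ) (hx : 0 < x) (hy : 0 < y) (hxy : y ≤ x) (k : ℕ) :
    ((k:ℝ)+1) * y^(k+1) ≤ Zs x y (k+1) := by
  have h1 : ∀ h ∈ Finset.range (k+2), y^(k+1) ≤ x^(k+1-h) * y^h := by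
    intro h hh
    have hhk : h ≤ k+1 := by have := Finset.mem_range.mp hh; omega
    have e : (k+1-h) + h = k+1 := by omega
    have p1 : y^(k+1-h) ≤ x^(k+1-h) := pow_le_pow_left₀ hy.le hxy _
    calc y^(k+1) = y^(k+1-h) * y^h := by rw [← pow_add, e]
    _ ≤ x^(k+1-h) * y^h := mul_le_mul_of_nonneg_right p1 (by positivity)
  have h2 := Finset.sum_le_sum h1
  rw [Finset.sum_const, Finset.card_range, nsmul_eq_mul] at h2
  unfold Zs
  push_cast at h2
  have hyk : (0:ℝ) < y^(k+1) := by positivity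
  nlinarith

lemma final (x y : ℝ) (hx : 0 < x) (hy : 0 < y) (hxy : y ≤ x) (k : ℕ) :
    As x y k / (y * Zs x y k) ≤ As x y (k+1) / (y * Zs x y (k+1)) := by
  have hZk : 0 < Zs x y k := Zs_pos x y hx hy k
  have hZk1 : 0 < Zs x y (k+1) := Zs_pos x y hx hy (k+1)
  rw [div_le_div_iff₀ (by positivity) (by positivity)]
  have hA := As_le x y hx hy k
  have hZ1 := Zs_ge x y hx hy hxy k
  have hzs := Zs_succ x y k
  have has := As_succ x y k
  have hyk : (0:ℝ) < y^(k+1) := by positivity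
  have hAnn : 0 ≤ As x y k := by
    unfold As
    apply Finset.sum_nonneg
    intro h hh; positivity
  have h1 : As x y k * y^(k+1) ≤ Zs x y k * Zs x y (k+1) := by
    nlinarith [mul_le_mul_of_nonneg_right hA hyk.le, mul_le_mul_of_nonneg_left hZ1 hZk.le]
  have h2 : As x y k * Zs x y (k+1) ≤ x * As x y k * Zs x y k + Zs x y k * Zs x y (k+1) := by
    have e := mul_le_mul_of_nonneg_left (le_of_eq hzs) hAnn
    nlinarith [h1, e]
  rw [has]
  nlinarith [mul_le_mul_of_nonneg_left h2 hy.le]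

/-- If `μ₁ ≥ μ₂`, the expected sojourn time at the second node,
`T₂(k) = Σ_{n=0}^{k} T₂(n+1, k−n)·p₁(n|k)`, is non-decreasing in `k`. -/
theorem stmt_18 (μ₁ μ₂ : ℝ) (hμ₁ : 0 < μ₁) (hμ₂ : 0 < μ₂) (hμ : μ₁ ≥ μ₂)
    (T : ℕ × ℕ → ℝ)
    (hT0 : ∀ m : ℕ, T (0, m) = m / μ₂)
    (hTb : ∀ n : ℕ, T (n + 1, 0) = 1 / μ₁ + T (n, 1))
    (hTrec : ∀ n m : ℕ, T (n + 1, m + 1) =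
      1 / (μ₁ + μ₂) + μ₁ / (μ₁ + μ₂) * T (n, m + 2) + μ₂ / (μ₁ + μ₂) * T (n + 1, m))
    (T₂ : ℕ → ℕ → ℝ)
    (hT₂ : ∀ n m : ℕ, T₂ n m = T (n, m) - n / μ₁) :
    ∀ k : ℕ,
      ∑ n ∈ Finset.range (k + 2), T₂ (n + 1) (k + 1 - n) * p1 μ₁ μ₂ n (k + 1) ≥
        ∑ n ∈ Finset.range (k + 1), T₂ (n + 1) (k - n) * p1 μ₁ μ₂ n k := by
  intro k
  have f1 := formula μ₁ μ₂ hμ₁ hμ₂ T hT0 hTb hTrec T₂ hT₂ (k+1)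
  have f0 := formula μ₁ μ₂ hμ₁ hμ₂ T hT0 hTb hTrec T₂ hT₂ k
  have e : k+1+1 = k+2 := rfl
  rw [e] at f1
  rw [ge_iff_le, f0, f1]
  exact final μ₁ μ₂ hμ₁ hμ₂ hμ k
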